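/- Let V be a type of variables with a constraint system (P, N, S), let (x, y) ∈ S, and let M, T : V → ZFSet be such that M models the literals P and N, the pair (M, T) satisfies the Ξ-conditions for (P, N, S), and M y ∉ M v for every v : V. Let S' be the set of pairs (x', y') ∈ S such that M_{x,y} x' ≠ M x'. Then: (x, y) ∈ S'; for every (x', y') ∈ S', M_{x,y} x' = {M_{x,y} y'}; M_{x,y} y = M y; and for every (x', y') ∈ S', M_{x,y} x' = M_{x,y} x and M_{x,y} y' = M_{x,y} y. -/

import Mathlib

/-- `M` models the positive literals `a = b \ c` in `P` and the negative literals
`a ≠ b \ c` in `N`. -/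
def ModelsLits {V : Type*} (P N : Finset (V × V × V)) (M : V → ZFSet) : Prop :=
  (∀ t ∈ P, M t.1 = M t.2.1 \ M t.2.2) ∧ (∀ t ∈ N, M t.1 ≠ M t.2.1 \ M t.2.2)

/-- `M` models the whole constraint system `(P, N, S)`. -/
def ModelsSystem {V : Type*} (P N : Finset (V × V × V)) (S : Finset (V × V))
    (M : V → ZFSet) : Prop :=
  ModelsLits P N M ∧ ∀ p ∈ S, M p.1 = {M p.2}

/-- The pair of assignments `(M, T)` satisfies the Ξ-conditions for the
constraint system `(P, N, S)`. -/
def XiConditions {V : Type*} (S : Finset (V × V)) (M T : V → ZFSet) : Prop :=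
  (∀ p ∈ S, ¬ M p.1 ⊆ M p.2) ∧
  (∀ p ∈ S, ∀ q ∈ S, (M p.2 = M q.2 ↔ M p.1 = M q.1)) ∧
  (∀ p ∈ S, ∀ v : V, M p.1 ∩ M v ≠ ∅ → M p.1 ⊆ M v) ∧
  (∀ p ∈ S, ∀ v : V, M p.1 ∩ M v ≠ ∅ → T p.2 ⊆ T v ∧ T p.2 ≠ T v) ∧
  (∀ u v : V, M u = M v → T u = T v)

open Classical in
/-- The modified assignment `M_{x,y}`. -/
noncomputable def modifyAssign {V : Type*} (M : V → ZFSet) (x y : V) : V → ZFSet :=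
  fun v => if M x ∩ M v = ∅ then M v else (M v \ M x) ∪ {M y}

theorem modify_changed_atoms {V : Type*} (P N : Finset (V × V × V)) (S : Finset (V × V))
    (x y : V) (hxy : (x, y) ∈ S) (M T : V → ZFSet)
    (hM : ModelsLits P N M) (hXi : XiConditions S M T)
    (hy : ∀ v : V, M y ∉ M v)
    (S' : Set (V × V)) (hS' : S' = {p : V × V | p ∈ S ∧ modifyAssign M x y p.1 ≠ M p.1}) :
    (x, y) ∈ S' ∧
    (∀ p ∈ S', modifyAssign M x y p.1 = {modifyAssign M x y p.2}) ∧
    modifyAssign M x y y = M y ∧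
    (∀ p ∈ S', modifyAssign M x y p.1 = modifyAssign M x y x ∧
      modifyAssign M x y p.2 = modifyAssign M x y y) := by

  classical
  obtain ⟨h1, h2, h3, h4, h5⟩ := hXi
  have comm : ∀ s t : ZFSet, s ∩ t = t ∩ s := fun s t =>
    ZFSet.ext fun z => by simp [ZFSet.mem_inter, and_comm]
  have hxne : M x ≠ ∅ := by
    intro h
    exact h1 (x, y) hxy (by rw [h]; exact ZFSet.empty_subset _)
  have hxx : M x ∩ M x ≠ ∅ := by
    rwa [show M x ∩ M x = M x from ZFSet.ext fun z => by simp [ZFSet.mem_inter]]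
  have hxyE : M x ∩ M y = ∅ := by
    by_contra h
    exact h1 (x, y) hxy (h3 (x, y) hxy y h)
  have modx : modifyAssign M x y x = {M y} := by
    simp only [modifyAssign, if_neg hxx]
    exact ZFSet.ext fun z => by simp [ZFSet.mem_union, ZFSet.mem_sdiff, ZFSet.mem_singleton]
  have mody : modifyAssign M x y y = M y := by
    simp [modifyAssign, hxyE]
  have key : ∀ p ∈ S', M p.1 = M x ∧ M p.2 = M y := by
    intro p hp
    rw [hS'] at hp
    obtain ⟨hpS, hne⟩ := hp
    have hint : M x ∩ M p.1 ≠ ∅ := by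
      intro h
      exact hne (by simp [modifyAssign, h])
    have h1x : M p.1 = M x :=
      ZFSet.ext fun z => ⟨fun hz => h3 p hpS x (by rwa [comm]) hz,
        fun hz => h3 (x, y) hxy p.1 hint hz⟩
    exact ⟨h1x, (h2 p hpS (x, y) hxy).2 h1x⟩
  have modp : ∀ p ∈ S', modifyAssign M x y p.1 = {M y} ∧ modifyAssign M x y p.2 = M y := by
    intro p hp
    obtain ⟨h1x, h2y⟩ := key p hp
    constructor
    · simp only [modifyAssign, h1x, if_neg hxx]
      exact ZFSet.ext fun z => by simp [ZFSet.mem_union, ZFSet.mem_sdiff, ZFSet.mem_singleton]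
    · simp [modifyAssign, h2y, hxyE]
  refine ⟨?_, fun p hp => ?_, mody, fun p hp => ?_⟩
  · rw [hS']
    refine ⟨hxy, ?_⟩
    rw [modx]
    intro h
    exact hy x (h ▸ ZFSet.mem_singleton.mpr rfl)
  · obtain ⟨ha, hb⟩ := modp p hp
    rw [ha, hb]
  · obtain ⟨ha, hb⟩ := modp p hp
    rw [ha, hb, modx, mody]
    exact ⟨rfl, rfl⟩
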